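/- A group G is finitely generated over a subgroup H (i.e., generated by H together with a finite set) if and only if there exists a connected G-graph X with a single orbit of vertices, finitely many orbits of edges, and a vertex o whose stabilizer is H. -/

import Mathlib

open Set

universe u

section Schreier

variable {G : Type u} [Group G] (H : Subgroup G) (S : Finset G)

/-- The Schreier coset graph of `G / H` with respect to `S`. -/
def schreierGraph : SimpleGraph (G ⧸ H) where
  Adj x y := x ≠ y ∧ ∃ g : G, ∃ s ∈ S,
    (x = (g : G ⧸ H) ∧ y = ((g * s : G) : G ⧸ H)) ∨
    (y = (g : G ⧸ H) ∧ x = ((g * s : G) : G ⧸ H))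
  symm := ⟨by
    rintro x y ⟨hne, g, s, hs, h⟩
    exact ⟨hne.symm, g, s, hs, h.symm⟩⟩
  loopless := ⟨fun x h => h.1 rfl⟩

lemma schreierGraph_adj_smul {x y : G ⧸ H} (g : G)
    (h : (schreierGraph H S).Adj x y) :
    (schreierGraph H S).Adj (g • x) (g • y) := by
  obtain ⟨hne, a, s, hs, hc⟩ := h
  refine ⟨fun he => hne ?_, g * a, s, hs, ?_⟩
  · have := congrArg (fun z => g⁻¹ • z) he
    simpa using this
  · rcases hc with ⟨hx, hy⟩ | ⟨hy, hx⟩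
    · subst hx; subst hy
      exact Or.inl ⟨rfl, by rw [mul_assoc]; rfl⟩
    · subst hx; subst hy
      exact Or.inr ⟨rfl, by rw [mul_assoc]; rfl⟩

/-- Left multiplication as a graph homomorphism of the Schreier graph. -/
def schreierHom (g : G) : schreierGraph H S →g schreierGraph H S where
  toFun := (g • ·)
  map_rel' := schreierGraph_adj_smul H S g

lemma schreierGraph_reachable_one (hcl : Subgroup.closure ((H : Set G) ∪ (S : Set G)) = ⊤)
    (g : G) : (schreierGraph H S).Reachable ((1 : G) : G ⧸ H) (g : G ⧸ H) := by
  have hg : g ∈ Subgroup.closure ((H : Set G) ∪ (S : Set G)) := by rw [hcl]; trivial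
  induction hg using Subgroup.closure_induction with
  | mem x hx =>
    rcases hx with hx | hx
    · -- x ∈ H : same coset
      have : ((x : G) : G ⧸ H) = ((1 : G) : G ⧸ H) := by
        rw [QuotientGroup.eq]; simpa using hx
      rw [this]
    · -- x ∈ S
      by_cases hxe : ((x : G) : G ⧸ H) = ((1 : G) : G ⧸ H)
      · rw [hxe]
      · refine SimpleGraph.Adj.reachable ?_
        exact ⟨Ne.symm hxe, 1, x, hx, Or.inl ⟨rfl, by rw [one_mul]⟩⟩
  | one => exact SimpleGraph.Reachable.refl _
  | mul x y hx hy ihx ihy =>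
    refine ihx.trans ?_
    have h : (schreierGraph H S).Reachable (x • ((1:G) : G ⧸ H)) (x • ((y:G) : G ⧸ H)) :=
      ihy.map (schreierHom H S x)
    have h1 : x • ((1:G) : G ⧸ H) = ((x * 1 : G) : G ⧸ H) := rfl
    have h2 : x • ((y:G) : G ⧸ H) = ((x * y : G) : G ⧸ H) := rfl
    rw [h1, h2, mul_one] at h
    exact h
  | inv x hx ihx =>
    have h : (schreierGraph H S).Reachable (x⁻¹ • ((1:G) : G ⧸ H)) (x⁻¹ • ((x:G) : G ⧸ H)) :=
      ihx.map (schreierHom H S x⁻¹)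
    have h1 : x⁻¹ • ((1:G) : G ⧸ H) = ((x⁻¹ * 1 : G) : G ⧸ H) := rfl
    have h2 : x⁻¹ • ((x:G) : G ⧸ H) = ((x⁻¹ * x : G) : G ⧸ H) := rfl
    rw [h1, h2, mul_one, inv_mul_cancel] at h
    exact h.symm

end Schreier

/-- `G` is finitely generated over a subgroup `H` iff there is a connected
`G`-graph with one orbit of vertices, finitely many orbits of edges, and a vertex `o`
whose stabilizer is `H`. -/
theorem fg_over_subgroup_iff_graph {G : Type u} [Group G] (H : Subgroup G) :
    (∃ S : Finset G, Subgroup.closure ((H : Set G) ∪ (S : Set G)) = ⊤) ↔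
    ∃ (W : Type u) (X : SimpleGraph W) (act : G → W → W),
      (∀ w, act 1 w = w) ∧
      (∀ g h w, act (g * h) w = act g (act h w)) ∧
      (∀ g u v, X.Adj u v ↔ X.Adj (act g u) (act g v)) ∧
      X.Connected ∧
      (∀ u v : W, ∃ g : G, act g u = v) ∧
      (∃ Es : Set (Sym2 W), Es.Finite ∧ Es ⊆ X.edgeSet ∧
        ∀ e ∈ X.edgeSet, ∃ g : G, ∃ e' ∈ Es, e = Sym2.map (act g) e') ∧
      (∃ o : W, ∀ g : G, act g o = o ↔ g ∈ H) := by
  constructor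
  · rintro ⟨S, hcl⟩
    refine ⟨G ⧸ H, schreierGraph H S, fun g x => g • x, fun w => one_smul _ _,
      fun g h w => mul_smul g h w, ?_, ?_, ?_, ?_, ?_⟩
    · -- invariance
      intro g u v
      constructor
      · exact schreierGraph_adj_smul H S g
      · intro h
        have := schreierGraph_adj_smul H S g⁻¹ h
        simpa using this
    · -- connected
      rw [SimpleGraph.connected_iff]
      refine ⟨fun x y => ?_, ⟨((1:G) : G ⧸ H)⟩⟩
      induction x using QuotientGroup.induction_on with
      | H a =>
      induction y using QuotientGroup.induction_on with
      | H b =>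
      exact (schreierGraph_reachable_one H S hcl a).symm.trans
        (schreierGraph_reachable_one H S hcl b)
    · -- transitive
      intro u v
      induction u using QuotientGroup.induction_on with
      | H a =>
      induction v using QuotientGroup.induction_on with
      | H b =>
      refine ⟨b * a⁻¹, ?_⟩
      show (((b * a⁻¹) * a : G) : G ⧸ H) = _
      rw [mul_assoc, inv_mul_cancel, mul_one]
    · -- finitely many edge orbits
      refine ⟨(fun s : G => s(((1:G) : G ⧸ H), ((s : G) : G ⧸ H))) ''
        {s : G | s ∈ S ∧ ((s : G) : G ⧸ H) ≠ ((1:G) : G ⧸ H)}, ?_, ?_, ?_⟩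
      · exact Set.Finite.image _ (S.finite_toSet.subset (fun s hs => hs.1))
      · rintro e ⟨s, ⟨hs, hne⟩, rfl⟩
        rw [SimpleGraph.mem_edgeSet]
        exact ⟨Ne.symm hne, 1, s, hs, Or.inl ⟨rfl, by rw [one_mul]⟩⟩
      · intro e he
        induction e using Sym2.ind with
        | _ x y =>
        rw [SimpleGraph.mem_edgeSet] at he
        obtain ⟨hne, g, s, hs, hc⟩ := he
        have hsne : ((s : G) : G ⧸ H) ≠ ((1:G) : G ⧸ H) := by
          intro hcon
          have hsH : s ∈ H := by
            have := QuotientGroup.eq.1 hcon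
            simpa using this
          apply hne
          rcases hc with ⟨hx, hy⟩ | ⟨hy, hx⟩
          · rw [hx, hy, QuotientGroup.eq]
            simpa using hsH
          · rw [hx, hy, QuotientGroup.eq]
            simpa [mul_inv_rev] using inv_mem hsH
        refine ⟨g, s(((1:G) : G ⧸ H), ((s : G) : G ⧸ H)), ⟨s, ⟨hs, hsne⟩, rfl⟩, ?_⟩
        show s(x, y) = Sym2.map (fun z => g • z) s(((1:G) : G ⧸ H), ((s : G) : G ⧸ H))
        rw [Sym2.map_pair_eq]
        show s(x, y) = s(((g * 1 : G) : G ⧸ H), ((g * s : G) : G ⧸ H))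
        rw [mul_one]
        rcases hc with ⟨hx, hy⟩ | ⟨hy, hx⟩
        · rw [hx, hy]
        · rw [hx, hy, Sym2.eq_swap]
    · -- stabilizer
      refine ⟨((1:G) : G ⧸ H), fun g => ?_⟩
      constructor
      · intro hg
        have : ((g * 1 : G) : G ⧸ H) = ((1:G) : G ⧸ H) := hg
        rw [mul_one, QuotientGroup.eq] at this
        simpa using this
      · intro hg
        show ((g * 1 : G) : G ⧸ H) = ((1:G) : G ⧸ H)
        rw [mul_one, QuotientGroup.eq]
        simpa using hg
  · rintro ⟨W, X, act, hone, hmul, hadj, hconn, htrans, ⟨Es, hEsfin, hEssub, hEscov⟩, o, ho⟩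
    classical
    -- choose coset representatives
    have hc : ∀ w : W, ∃ g : G, act g o = w := fun w => htrans o w
    let c : W → G := fun w => (hc w).choose
    have hcspec : ∀ w, act (c w) o = w := fun w => (hc w).choose_spec
    -- representatives of unordered pairs
    have hex : ∀ e : Sym2 W, ∃ p : W × W, Sym2.mk p.1 p.2 = e :=
      fun e => Sym2.ind (fun u v => ⟨(u, v), rfl⟩) e
    let rep : Sym2 W → W × W := fun e => (hex e).choose
    have hrep : ∀ e, Sym2.mk (rep e).1 (rep e).2 = e := fun e => (hex e).choose_spec
    let T : Set G := ⋃ e ∈ Es, {c (rep e).1, c (rep e).2}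
    have hTfin : T.Finite :=
      hEsfin.biUnion (fun e _ => (Set.finite_singleton _).insert _)
    refine ⟨hTfin.toFinset, ?_⟩
    rw [hTfin.coe_toFinset]
    set K := Subgroup.closure ((H : Set G) ∪ T) with hK
    have hHK : ∀ h ∈ H, h ∈ K := fun h hh =>
      Subgroup.subset_closure (Or.inl hh)
    have hTK : ∀ t ∈ T, t ∈ K := fun t ht =>
      Subgroup.subset_closure (Or.inr ht)
    -- key: edge translations lie in K
    have hedge : ∀ t : G, X.Adj o (act t o) → t ∈ K := by
      intro t hadj'
      have hmem : s(o, act t o) ∈ X.edgeSet := X.mem_edgeSet.2 hadj'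
      obtain ⟨g, e', he', hmap⟩ := hEscov _ hmem
      set u := (rep e').1 with hu
      set v := (rep e').2 with hv
      have hmk : Sym2.mk u v = e' := hrep e'
      have haT : c u ∈ T := by
        refine Set.mem_biUnion he' ?_
        exact Set.mem_insert _ _
      have hbT : c v ∈ T := by
        refine Set.mem_biUnion he' ?_
        exact Set.mem_insert_of_mem _ rfl
      rw [← hmk] at hmap
      have hmap' : s(o, act t o) = s(act g u, act g v) := by
        rw [hmap]; exact Sym2.map_pair_eq _ _ _
      set a := c u with ha
      set b := c v with hb
      have hao : act a o = u := hcspec u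
      have hbo : act b o = v := hcspec v
      have haK : a ∈ K := hTK a haT
      have hbK : b ∈ K := hTK b hbT
      rw [Sym2.eq_iff] at hmap'
      rcases hmap' with ⟨h1, h2⟩ | ⟨h1, h2⟩
      · -- act g u = o, act g v = act t o
        have hga : g * a ∈ H := by
          rw [← ho]
          rw [hmul, hao, ← h1]
        have hgb : t⁻¹ * (g * b) ∈ H := by
          rw [← ho]
          rw [hmul, hmul, hbo, ← h2, ← hmul, inv_mul_cancel, hone]
        have heq : t = (g * a) * (a⁻¹ * b) * (t⁻¹ * (g * b))⁻¹ := by group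
        rw [heq]
        exact mul_mem (mul_mem (hHK _ hga) (mul_mem (inv_mem haK) hbK))
          (inv_mem (hHK _ hgb))
      · -- act g u = act t o, act g v = o
        have hga : g * b ∈ H := by
          rw [← ho]
          rw [hmul, hbo, ← h1]
        have hgb : t⁻¹ * (g * a) ∈ H := by
          rw [← ho]
          rw [hmul, hmul, hao, ← h2, ← hmul, inv_mul_cancel, hone]
        have heq : t = (g * b) * (b⁻¹ * a) * (t⁻¹ * (g * a))⁻¹ := by group
        rw [heq]
        exact mul_mem (mul_mem (hHK _ hga) (mul_mem (inv_mem hbK) haK))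
          (inv_mem (hHK _ hgb))
    -- walk induction
    have walkind : ∀ {x y : W} (p : X.Walk x y), ∀ a g : G,
        act a o = x → act g o = y → a⁻¹ * g ∈ K := by
      intro x y p
      induction p with
      | nil =>
        intro a g hax hgy
        have : act (a⁻¹ * g) o = o := by
          rw [hmul, hgy, ← hax, ← hmul, inv_mul_cancel, hone]
        exact hHK _ ((ho _).1 this)
      | @cons x w y hxw p ih =>
        intro a g hax hgy
        obtain ⟨b, hbw⟩ := htrans o w
        have hadjw : X.Adj o (act (a⁻¹ * b) o) := by
          have := (hadj a⁻¹ x w).1 hxw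
          rw [← hax, ← hmul, inv_mul_cancel, hone, ← hbw, ← hmul] at this
          exact this
        have h1 : a⁻¹ * b ∈ K := hedge _ hadjw
        have h2 : b⁻¹ * g ∈ K := ih b g hbw hgy
        have : a⁻¹ * g = (a⁻¹ * b) * (b⁻¹ * g) := by group
        rw [this]
        exact mul_mem h1 h2
    -- conclude
    rw [eq_top_iff]
    intro g _
    obtain ⟨p⟩ := hconn.preconnected o (act g o)
    have := walkind p 1 g (hone o) rfl
    simpa using this
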